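/- Let r̄ ∈ ℝⁿ and suppose ε > r̄ᵀΣ⁻¹r̄ − (r̄ᵀΣ⁻¹e)²/β. Set D = √( (r̄ᵀΣ⁻¹e)² − β(r̄ᵀΣ⁻¹r̄ − ε) ). Then the vector x_WVaR = x_MIN + (Σ⁻¹ − Σ⁻¹e eᵀΣ⁻¹/β) r̄ / D is a minimizer of the function x ↦ √ε·√(xᵀΣx) − r̄ᵀx over C, and the minimum value equals ( −r̄ᵀΣ⁻¹e + D ) / β. -/

import Mathlib

open Matrix

open scoped MatrixOrder in
/-- Cauchy–Schwarz for a real positive semidefinite matrix. -/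
lemma cs_psd {n : ℕ} {A : Matrix (Fin n) (Fin n) ℝ} (hA : A.PosSemidef)
    (x y : Fin n → ℝ) :
    (x ⬝ᵥ A *ᵥ y) ^ 2 ≤ (x ⬝ᵥ A *ᵥ x) * (y ⬝ᵥ A *ᵥ y) := by
  set S := CFC.sqrt A with hSdef
  have hS : S * S = A := CFC.sqrt_mul_sqrt_self A hA.nonneg
  have hSymm : Sᵀ = S := by
    have h := (CFC.sqrt_nonneg A).posSemidef.1
    simpa [Matrix.IsHermitian, Matrix.conjTranspose_eq_transpose_of_trivial] using h
  have key : ∀ u v : Fin n → ℝ, u ⬝ᵥ A *ᵥ v = (S *ᵥ u) ⬝ᵥ (S *ᵥ v) := by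
    intro u v
    rw [← hS, ← Matrix.mulVec_mulVec, Matrix.dotProduct_mulVec, ← Matrix.mulVec_transpose,
      hSymm]
  rw [key x y, key x x, key y y]
  simpa [dotProduct, sq] using
    Finset.sum_mul_sq_le_sq_mul_sq Finset.univ (S *ᵥ x) (S *ᵥ y)

/-- when `ε > r̄ᵀΣ⁻¹r̄ − (r̄ᵀΣ⁻¹e)²/β` and
`D = √((r̄ᵀΣ⁻¹e)² − β(r̄ᵀΣ⁻¹r̄ − ε))`, the vector
`x_WVaR = x_MIN + (Σ⁻¹ − Σ⁻¹e eᵀΣ⁻¹/β) r̄ / D` minimizes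
`x ↦ √ε √(xᵀΣx) − r̄ᵀx` over `C`, with minimum value `(−r̄ᵀΣ⁻¹e + D)/β`. -/
theorem stmt6 (n : ℕ) (hn : 1 ≤ n) (A : Matrix (Fin n) (Fin n) ℝ)
    (hA : A.PosDef) (hAs : A.IsSymm)
    (e : Fin n → ℝ) (he : e = fun _ => 1)
    (β : ℝ) (hβ : β = e ⬝ᵥ A⁻¹ *ᵥ e)
    (xMIN : Fin n → ℝ) (hxMIN : xMIN = β⁻¹ • (A⁻¹ *ᵥ e))
    (rbar : Fin n → ℝ) (ε : ℝ)
    (hε : rbar ⬝ᵥ A⁻¹ *ᵥ rbar - (rbar ⬝ᵥ A⁻¹ *ᵥ e) ^ 2 / β < ε)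
    (D : ℝ)
    (hD : D = Real.sqrt ((rbar ⬝ᵥ A⁻¹ *ᵥ e) ^ 2 - β * (rbar ⬝ᵥ A⁻¹ *ᵥ rbar - ε)))
    (xWVaR : Fin n → ℝ)
    (hxWVaR : xWVaR = xMIN +
        D⁻¹ • ((A⁻¹ - β⁻¹ • vecMulVec (A⁻¹ *ᵥ e) (e ᵥ* A⁻¹)) *ᵥ rbar)) :
    e ⬝ᵥ xWVaR = 1 ∧
    (∀ y : Fin n → ℝ, e ⬝ᵥ y = 1 →
      Real.sqrt ε * Real.sqrt (xWVaR ⬝ᵥ A *ᵥ xWVaR) - rbar ⬝ᵥ xWVaR ≤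
        Real.sqrt ε * Real.sqrt (y ⬝ᵥ A *ᵥ y) - rbar ⬝ᵥ y) ∧
    Real.sqrt ε * Real.sqrt (xWVaR ⬝ᵥ A *ᵥ xWVaR) - rbar ⬝ᵥ xWVaR =
      (-(rbar ⬝ᵥ A⁻¹ *ᵥ e) + D) / β := by
  -- basic invertibility and symmetry facts
  have hBpd : (A⁻¹).PosDef := hA.inv
  have hBs : (A⁻¹)ᵀ = A⁻¹ := by
    rw [Matrix.transpose_nonsing_inv, hAs]
  have hdetA : IsUnit A.det := isUnit_iff_ne_zero.mpr hA.det_pos.ne'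
  have hABv : ∀ w : Fin n → ℝ, A *ᵥ (A⁻¹ *ᵥ w) = w := by
    intro w
    rw [Matrix.mulVec_mulVec, Matrix.mul_nonsing_inv _ hdetA, Matrix.one_mulVec]
  have hsymmdot : ∀ w z : Fin n → ℝ, w ⬝ᵥ A⁻¹ *ᵥ z = z ⬝ᵥ A⁻¹ *ᵥ w := by
    intro w z
    rw [Matrix.dotProduct_mulVec, ← Matrix.mulVec_transpose, hBs, dotProduct_comm]
  set u : Fin n → ℝ := A⁻¹ *ᵥ e with hu
  set v : Fin n → ℝ := A⁻¹ *ᵥ rbar with hv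
  set a : ℝ := rbar ⬝ᵥ u with ha
  set b : ℝ := rbar ⬝ᵥ v with hb
  -- key dot products
  have heu : e ⬝ᵥ u = β := hβ.symm
  have hev : e ⬝ᵥ v = a := hsymmdot e rbar
  -- positivity
  have hne : e ≠ 0 := by
    subst he
    intro h
    have := congrFun h ⟨0, hn⟩
    simpa using this
  have hβpos : 0 < β := by
    rw [hβ]
    have := hBpd.dotProduct_mulVec_pos hne
    simpa using this
  have hβne : β ≠ 0 := hβpos.ne'
  -- the vecMulVec action
  have hvmv : ∀ (w z x : Fin n → ℝ), vecMulVec w z *ᵥ x = (z ⬝ᵥ x) • w := by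
    intro w z x
    ext i
    simp [Matrix.vecMulVec, Matrix.mulVec, dotProduct, Finset.mul_sum, mul_assoc,
      mul_comm, mul_left_comm]
  have hvM : e ᵥ* A⁻¹ = u := by
    rw [← Matrix.mulVec_transpose, hBs]
  -- explicit form of xWVaR
  have hx : xWVaR = β⁻¹ • u + D⁻¹ • (v - (β⁻¹ * a) • u) := by
    rw [hxWVaR, hxMIN, hvM]
    congr 1
    congr 1
    rw [Matrix.sub_mulVec, Matrix.smul_mulVec, hvmv]
    have : u ⬝ᵥ rbar = a := dotProduct_comm u rbar
    rw [this, smul_smul]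
  -- k and D
  set k : ℝ := b - a ^ 2 / β with hk
  have hkε : k < ε := hε
  have hknn : 0 ≤ k := by
    have h0 := hA.posSemidef.dotProduct_mulVec_nonneg (v - (β⁻¹ * a) • u)
    have hAw : A *ᵥ (v - (β⁻¹ * a) • u) = rbar - (β⁻¹ * a) • e := by
      rw [Matrix.mulVec_sub, Matrix.mulVec_smul, hv, hu, hABv, hABv]
    rw [hAw] at h0
    have hexp : (v - (β⁻¹ * a) • u) ⬝ᵥ (rbar - (β⁻¹ * a) • e) = b - a ^ 2 / β := by
      have h1 : v ⬝ᵥ rbar = b := dotProduct_comm v rbar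
      have h2 : v ⬝ᵥ e = a := by rw [dotProduct_comm]; exact hev
      have h3 : u ⬝ᵥ rbar = a := dotProduct_comm u rbar
      have h4 : u ⬝ᵥ e = β := by rw [dotProduct_comm]; exact heu
      simp only [sub_dotProduct, dotProduct_sub, smul_dotProduct, dotProduct_smul,
        smul_eq_mul, h1, h2, h3, h4]
      field_simp
      ring
    rw [show star (v - (β⁻¹ * a) • u) = v - (β⁻¹ * a) • u from star_trivial _, hexp] at h0
    rw [hk]
    exact h0
  have hεpos : 0 < ε := lt_of_le_of_lt hknn hkε
  have hDval : D = Real.sqrt (β * (ε - k)) := by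
    rw [hD]
    congr 1
    rw [hk]
    field_simp
    ring
  have hDpos : 0 < D := by
    rw [hDval]
    exact Real.sqrt_pos.mpr (by nlinarith)
  have hDne : D ≠ 0 := hDpos.ne'
  have hDsq : D ^ 2 = β * (ε - k) := by
    rw [hDval, Real.sq_sqrt (by nlinarith)]
  -- key dot products with xWVaR
  have hex : e ⬝ᵥ xWVaR = 1 := by
    rw [hx]
    simp only [dotProduct_add, dotProduct_sub, dotProduct_smul, smul_eq_mul, heu, hev]
    field_simp
    ring
  have hrx : rbar ⬝ᵥ xWVaR = β⁻¹ * a + D⁻¹ * k := by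
    rw [hx]
    simp only [dotProduct_add, dotProduct_sub, dotProduct_smul, smul_eq_mul, ← ha, ← hb]
    rw [hk, div_eq_mul_inv]
    ring
  have hAx : A *ᵥ xWVaR = β⁻¹ • e + D⁻¹ • (rbar - (β⁻¹ * a) • e) := by
    rw [hx]
    rw [Matrix.mulVec_add, Matrix.mulVec_smul, Matrix.mulVec_smul, Matrix.mulVec_sub,
      Matrix.mulVec_smul, hv, hu, hABv, hABv]
  have hdotAx : ∀ y : Fin n → ℝ,
      y ⬝ᵥ A *ᵥ xWVaR = β⁻¹ * (y ⬝ᵥ e) + D⁻¹ * ((y ⬝ᵥ rbar) - β⁻¹ * a * (y ⬝ᵥ e)) := by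
    intro y
    rw [hAx]
    simp only [dotProduct_add, dotProduct_sub, dotProduct_smul, smul_eq_mul]
  have hxAx : xWVaR ⬝ᵥ A *ᵥ xWVaR = ε / D ^ 2 := by
    rw [hdotAx xWVaR]
    have h1 : xWVaR ⬝ᵥ e = 1 := by rw [dotProduct_comm]; exact hex
    have h2 : xWVaR ⬝ᵥ rbar = β⁻¹ * a + D⁻¹ * k := by rw [dotProduct_comm]; exact hrx
    rw [h1, h2]
    field_simp
    linear_combination hDsq
  -- the value of the objective at xWVaR
  have hsqrtx : Real.sqrt ε * Real.sqrt (xWVaR ⬝ᵥ A *ᵥ xWVaR) = ε / D := by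
    rw [hxAx]
    have : ε / D ^ 2 = (Real.sqrt ε / D) ^ 2 := by
      rw [div_pow, Real.sq_sqrt hεpos.le]
    rw [this, Real.sqrt_sq (by positivity), div_eq_mul_inv, ← mul_assoc,
      Real.mul_self_sqrt hεpos.le, ← div_eq_mul_inv]
  have hval : Real.sqrt ε * Real.sqrt (xWVaR ⬝ᵥ A *ᵥ xWVaR) - rbar ⬝ᵥ xWVaR =
      (-a + D) / β := by
    rw [hsqrtx, hrx]
    field_simp
    linear_combination (-1 : ℝ) * hDsq
  refine ⟨hex, ?_, hval⟩
  -- optimality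
  intro y hy
  rw [hval]
  have hyAy : 0 ≤ y ⬝ᵥ A *ᵥ y := by
    simpa using hA.posSemidef.dotProduct_mulVec_nonneg y
  have hyAx : y ⬝ᵥ A *ᵥ xWVaR = β⁻¹ + D⁻¹ * ((y ⬝ᵥ rbar) - β⁻¹ * a) := by
    rw [hdotAx y, dotProduct_comm y e, hy]
    ring
  set t : ℝ := rbar ⬝ᵥ y + (-a + D) / β with ht
  have htD : t = D * (y ⬝ᵥ A *ᵥ xWVaR) := by
    rw [hyAx, ht, dotProduct_comm rbar y]
    field_simp
    ring
  have hgoal : t ≤ Real.sqrt ε * Real.sqrt (y ⬝ᵥ A *ᵥ y) := by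
    rcases le_or_gt t 0 with h | h
    · exact h.trans (by positivity)
    · have hcs := cs_psd hA.posSemidef y xWVaR
      rw [hxAx] at hcs
      have ht2 : t ^ 2 ≤ ε * (y ⬝ᵥ A *ᵥ y) := by
        rw [htD, mul_pow]
        calc D ^ 2 * (y ⬝ᵥ A *ᵥ xWVaR) ^ 2
            ≤ D ^ 2 * ((y ⬝ᵥ A *ᵥ y) * (ε / D ^ 2)) := by
              apply mul_le_mul_of_nonneg_left hcs (by positivity)
          _ = ε * (y ⬝ᵥ A *ᵥ y) := by field_simp
      calc t = Real.sqrt (t ^ 2) := by rw [Real.sqrt_sq h.le]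
        _ ≤ Real.sqrt (ε * (y ⬝ᵥ A *ᵥ y)) := Real.sqrt_le_sqrt ht2
        _ = Real.sqrt ε * Real.sqrt (y ⬝ᵥ A *ᵥ y) := Real.sqrt_mul hεpos.le _
  rw [ht] at hgoal
  linarith
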